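/- Suppose each f_i is convex with L_i-Lipschitz gradient, L = max_i L_i, and set L' = L·λ_max(𝕃), where λ_max(𝕃) is the largest eigenvalue of 𝕃. Let (x*, q*) satisfy x* − r + c Uᵀ q* = 0 and U ∇f(x*) = 0. Then any Mirror-EXTRA trajectory (x^k, q^k) satisfies, for all k ≥ 0, c‖q^{k+1} − q*‖_F² + (2/L' − c)‖∇f(x^{k+1}) − ∇f(x*)‖_𝕃² ≤ c‖q^k − q*‖_F² − c‖q^k − q^{k+1}‖_F² − c‖∇f(x^k) − ∇f(x*)‖_𝕃² + c‖∇f(x^k) − ∇f(x^{k+1})‖_𝕃². -/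

import Mathlib

open Matrix

noncomputable section

/-- Squared Frobenius norm. -/
def frobSq {m p : ℕ} (A : Matrix (Fin m) (Fin p) ℝ) : ℝ := ∑ i, ∑ j, (A i j) ^ 2

/-- Squared `P`-weighted seminorm `⟨A, P A⟩ = tr(Aᵀ P A)`. -/
def wSq {m p : ℕ} (P : Matrix (Fin m) (Fin m) ℝ) (A : Matrix (Fin m) (Fin p) ℝ) : ℝ :=
  Matrix.trace (Aᵀ * P * A)

/-- Squared Euclidean norm of a vector. -/
def enormSq {p : ℕ} (u : Fin p → ℝ) : ℝ := ∑ j, (u j) ^ 2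

/-- The matrix whose `i`-th row is `∇fᵢ(xᵢ)`, given the gradient maps `g i`. -/
def gradMat {n p : ℕ} (g : Fin n → (Fin p → ℝ) → (Fin p → ℝ))
    (x : Matrix (Fin n) (Fin p) ℝ) : Matrix (Fin n) (Fin p) ℝ :=
  Matrix.of fun i => g i (x i)

local notation "⟪" x ", " y "⟫" => @inner ℝ _ _ x y

section Hilbert

open Set

variable {H : Type*} [NormedAddCommGroup H] [InnerProductSpace ℝ H] [CompleteSpace H]

theorem grad_lower (F : H → ℝ) (G : H → H) (hg : ∀ u, HasGradientAt F (G u) u)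
    (hc : ConvexOn ℝ univ F) (u w : H) :
    F u + ⟪G u, w - u⟫ ≤ F w := by
  set φ : ℝ → ℝ := fun t => F (AffineMap.lineMap u w t) with hφ
  have hconvφ : ConvexOn ℝ univ φ := by
    have := hc.comp_affineMap (AffineMap.lineMap (k := ℝ) u w)
    exact this
  have hd : HasDerivAt φ ⟪G u, w - u⟫ 0 := by
    have h1 : HasDerivAt (fun t : ℝ => AffineMap.lineMap u w t) (w - u) 0 := by
      simp only [AffineMap.lineMap_apply, vsub_eq_sub, vadd_eq_add]
      simpa using ((hasDerivAt_id (0:ℝ)).smul_const (w - u)).add_const u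
    have h2 : HasFDerivAt F (InnerProductSpace.toDual ℝ H (G u)) u :=
      hasGradientAt_iff_hasFDerivAt.mp (hg u)
    have h2' : HasFDerivAt F (InnerProductSpace.toDual ℝ H (G u))
        ((fun t : ℝ => AffineMap.lineMap u w t) 0) := by
      simpa using h2
    have := h2'.comp_hasDerivAt 0 h1
    exact this
  have hs := hconvφ.le_slope_of_hasDerivAt (mem_univ (0:ℝ)) (mem_univ 1) one_pos hd
  rw [slope_def_field] at hs
  have e0 : φ 0 = F u := by simp [hφ]
  have e1 : φ 1 = F w := by simp [hφ]
  rw [e0, e1] at hs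
  have : ⟪G u, w - u⟫ ≤ F w - F u := by
    simpa using hs
  linarith

theorem descent_lemma (F : H → ℝ) (G : H → H) (hg : ∀ u, HasGradientAt F (G u) u)
    (L : ℝ) (hL : 0 ≤ L) (hlip : ∀ a b, ‖G a - G b‖ ≤ L * ‖a - b‖) (u w : H) :
    F w ≤ F u + ⟪G u, w - u⟫ + L / 2 * ‖w - u‖ ^ 2 := by
  set ψ : ℝ → ℝ := fun t => F (u + t • (w - u)) - t * ⟪G u, w - u⟫
      - L * t ^ 2 / 2 * ‖w - u‖ ^ 2 with hψ
  have hψd : ∀ t : ℝ, HasDerivAt ψ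
      (⟪G (u + t • (w - u)), w - u⟫ - ⟪G u, w - u⟫ - L * t * ‖w - u‖ ^ 2) t := by
    intro t
    have h1 : HasDerivAt (fun t : ℝ => u + t • (w - u)) (w - u) t := by
      simpa using ((hasDerivAt_id t).smul_const (w - u)).const_add u
    have h2 : HasFDerivAt F (InnerProductSpace.toDual ℝ H (G (u + t • (w - u))))
        ((fun t : ℝ => u + t • (w - u)) t) := hasGradientAt_iff_hasFDerivAt.mp (hg _)
    have h3 : HasDerivAt (fun t : ℝ => F (u + t • (w - u)))
        ⟪G (u + t • (w - u)), w - u⟫ t := by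
      exact h2.comp_hasDerivAt t h1
    have h4 : HasDerivAt (fun t : ℝ => t * ⟪G u, w - u⟫) ⟪G u, w - u⟫ t := by
      simpa using (hasDerivAt_id t).mul_const (⟪G u, w - u⟫ : ℝ)
    have h5 : HasDerivAt (fun t : ℝ => L * t ^ 2 / 2 * ‖w - u‖ ^ 2)
        (L * t * ‖w - u‖ ^ 2) t := by
      have := (((hasDerivAt_pow 2 t).const_mul L).div_const 2).mul_const (‖w - u‖ ^ 2)
      exact this.congr_deriv (by rw [show (2:ℕ) - 1 = 1 from rfl]; push_cast; ring)
    exact (h3.sub h4).sub h5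
  have hanti : AntitoneOn ψ (Icc 0 1) := by
    apply antitoneOn_of_deriv_nonpos (convex_Icc 0 1)
    · exact fun t _ => ((hψd t).differentiableAt.continuousAt).continuousWithinAt
    · exact fun t _ => (hψd t).differentiableAt.differentiableWithinAt
    · intro t ht
      rw [interior_Icc] at ht
      rw [(hψd t).deriv]
      have key : ⟪G (u + t • (w - u)) - G u, w - u⟫ ≤ L * t * ‖w - u‖ ^ 2 := by
        have h6 : ⟪G (u + t • (w - u)) - G u, w - u⟫
            ≤ ‖G (u + t • (w - u)) - G u‖ * ‖w - u‖ := real_inner_le_norm _ _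
        have h7 : ‖G (u + t • (w - u)) - G u‖ ≤ L * ‖t • (w - u)‖ := by
          have := hlip (u + t • (w - u)) u
          simpa using this
        have h8 : ‖t • (w - u)‖ = t * ‖w - u‖ := by
          rw [norm_smul, Real.norm_eq_abs, abs_of_pos ht.1]
        calc ⟪G (u + t • (w - u)) - G u, w - u⟫
            ≤ ‖G (u + t • (w - u)) - G u‖ * ‖w - u‖ := h6
          _ ≤ (L * ‖t • (w - u)‖) * ‖w - u‖ :=
              mul_le_mul_of_nonneg_right h7 (norm_nonneg _)
          _ = L * t * ‖w - u‖ ^ 2 := by rw [h8]; ring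
      rw [inner_sub_left] at key
      linarith
  have h9 := hanti (Set.left_mem_Icc.mpr zero_le_one) (Set.right_mem_Icc.mpr zero_le_one)
    zero_le_one
  have e0 : ψ 0 = F u := by simp [hψ]
  have e1 : ψ 1 = F w - ⟪G u, w - u⟫ - L / 2 * ‖w - u‖ ^ 2 := by
    simp [hψ]
  rw [e0, e1] at h9
  linarith

theorem cocoH (F : H → ℝ) (G : H → H) (hg : ∀ u, HasGradientAt F (G u) u)
    (hc : ConvexOn ℝ univ F)
    (L : ℝ) (hL : 0 < L) (hlip : ∀ a b, ‖G a - G b‖ ≤ L * ‖a - b‖) (a b : H) :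
    ‖G a - G b‖ ^ 2 ≤ L * ⟪a - b, G a - G b⟫ := by
  have half : ∀ x y : H, F y + ⟪G y, x - y⟫ + 1 / (2 * L) * ‖G x - G y‖ ^ 2 ≤ F x := by
    intro x y
    set w := x - (1 / L) • (G x - G y) with hw
    have h1 := grad_lower F G hg hc y w
    have h2 := descent_lemma F G hg L hL.le hlip x w
    have e1 : w - x = -((1 / L) • (G x - G y)) := by rw [hw]; abel
    have e2 : (⟪G x, w - x⟫ : ℝ) = -(1 / L) * ⟪G x, G x - G y⟫ := by
      rw [e1, inner_neg_right, real_inner_smul_right]; ring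
    have e3 : ‖w - x‖ ^ 2 = (1 / L) ^ 2 * ‖G x - G y‖ ^ 2 := by
      rw [e1, norm_neg, norm_smul, mul_pow, Real.norm_eq_abs, sq_abs]
    have e4 : (⟪G y, w - y⟫ : ℝ) = ⟪G y, x - y⟫ - (1 / L) * ⟪G y, G x - G y⟫ := by
      have : w - y = (x - y) - (1 / L) • (G x - G y) := by rw [hw]; abel
      rw [this, inner_sub_right, real_inner_smul_right]
    have e5 : (⟪G x, G x - G y⟫ : ℝ) - ⟪G y, G x - G y⟫ = ‖G x - G y‖ ^ 2 := by
      rw [← inner_sub_left, real_inner_self_eq_norm_sq]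
    have hL' : L ≠ 0 := ne_of_gt hL
    have e6 : L / 2 * ((1 / L) ^ 2 * ‖G x - G y‖ ^ 2)
        = 1 / (2 * L) * ‖G x - G y‖ ^ 2 := by
      field_simp
    rw [e2, e3] at h2
    rw [e4] at h1
    have e5' : 1 / L * ⟪G x, G x - G y⟫ - 1 / L * ⟪G y, G x - G y⟫
        = 1 / L * ‖G x - G y‖ ^ 2 := by rw [← mul_sub, e5]
    have e11 : 1 / (2 * L) * ‖G x - G y‖ ^ 2 + 1 / (2 * L) * ‖G x - G y‖ ^ 2
        = 1 / L * ‖G x - G y‖ ^ 2 := by field_simp; ring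
    linarith [h1, h2, e5', e6, e11]
  have hab := half a b
  have hba := half b a
  have e7 : ‖G b - G a‖ = ‖G a - G b‖ := norm_sub_rev _ _
  have e8 : (⟪G a, b - a⟫ : ℝ) = -⟪G a, a - b⟫ := by
    rw [show b - a = -(a - b) by abel, inner_neg_right]
  have e9 : (⟪G a, a - b⟫ : ℝ) - ⟪G b, a - b⟫ = ⟪a - b, G a - G b⟫ := by
    rw [← inner_sub_left, real_inner_comm]
  rw [e7] at hba
  rw [e8] at hba
  have h10 : 1 / L * ‖G a - G b‖ ^ 2 ≤ ⟪a - b, G a - G b⟫ := by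
    have e11 : 1 / (2 * L) * ‖G a - G b‖ ^ 2 + 1 / (2 * L) * ‖G a - G b‖ ^ 2
        = 1 / L * ‖G a - G b‖ ^ 2 := by field_simp; ring
    linarith [hab, hba, e9, e11]
  have := mul_le_mul_of_nonneg_left h10 hL.le
  calc ‖G a - G b‖ ^ 2 = L * (1 / L * ‖G a - G b‖ ^ 2) := by field_simp
    _ ≤ L * ⟪a - b, G a - G b⟫ := this

end Hilbert

theorem cocoer_row (p : ℕ) (F : (Fin p → ℝ) → ℝ) (G : (Fin p → ℝ) → Fin p → ℝ)
    (hgrad : ∀ u : Fin p → ℝ,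
      HasGradientAt (fun v : EuclideanSpace ℝ (Fin p) => F ((WithLp.equiv 2 (Fin p → ℝ)) v))
        ((WithLp.equiv 2 (Fin p → ℝ)).symm (G u)) ((WithLp.equiv 2 (Fin p → ℝ)).symm u))
    (hconv : ConvexOn ℝ Set.univ F) (L : ℝ) (hL : 0 < L)
    (hlip : ∀ u v, enormSq (G u - G v) ≤ L ^ 2 * enormSq (u - v)) (a b : Fin p → ℝ) :
    enormSq (G a - G b) ≤ L * ∑ j, (a j - b j) * (G a j - G b j) := by
  classical
  set e := WithLp.equiv 2 (Fin p → ℝ) with he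
  set F' : EuclideanSpace ℝ (Fin p) → ℝ := fun v => F (e v) with hF'
  set G' : EuclideanSpace ℝ (Fin p) → EuclideanSpace ℝ (Fin p) := fun v => e.symm (G (e v))
    with hG'
  have hg' : ∀ u, HasGradientAt F' (G' u) u := by
    intro u
    have := hgrad (e u)
    simpa [hF', hG', Equiv.symm_apply_apply] using this
  have hc' : ConvexOn ℝ Set.univ F' := by
    refine ⟨convex_univ, fun x _ y _ α β hα hβ hαβ => ?_⟩
    have h := hconv.2 (Set.mem_univ (e x)) (Set.mem_univ (e y)) hα hβ hαβ
    exact h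
  have hnorm : ∀ z : EuclideanSpace ℝ (Fin p), ‖z‖ ^ 2 = enormSq (e z) := by
    intro z
    rw [EuclideanSpace.norm_eq, Real.sq_sqrt (by positivity)]
    simp [enormSq, he, Real.norm_eq_abs, sq_abs]
  have hGe : ∀ u v : EuclideanSpace ℝ (Fin p), e (G' u - G' v) = G (e u) - G (e v) := by
    intro u v
    rw [hG']
    simp [he]
  have hlip' : ∀ u v : EuclideanSpace ℝ (Fin p), ‖G' u - G' v‖ ≤ L * ‖u - v‖ := by
    intro u v
    have h1 : ‖G' u - G' v‖ ^ 2 ≤ (L * ‖u - v‖) ^ 2 := by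
      rw [hnorm, hGe, mul_pow, hnorm]
      have h2 : e (u - v) = e u - e v := by simp [he]
      rw [h2]
      exact hlip (e u) (e v)
    have h3 : (0:ℝ) ≤ L * ‖u - v‖ := by positivity
    nlinarith [norm_nonneg (G' u - G' v)]
  have hco := cocoH F' G' hg' hc' L hL hlip' (e.symm a) (e.symm b)
  have hL1 : ‖G' (e.symm a) - G' (e.symm b)‖ ^ 2 = enormSq (G a - G b) := by
    rw [hnorm, hGe]
    simp [he]
  have hR1 : (⟪e.symm a - e.symm b, G' (e.symm a) - G' (e.symm b)⟫ : ℝ)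
      = ∑ j, (a j - b j) * (G a j - G b j) := by
    rw [PiLp.inner_apply]
    refine Finset.sum_congr rfl fun j _ => ?_
    simp [hG', he, RCLike.inner_apply]
    ring
  rw [hL1, hR1] at hco
  exact hco

theorem quad_le_lmax {n : ℕ} (M : Matrix (Fin n) (Fin n) ℝ) (hM : M.IsHermitian) (lmax : ℝ)
    (hmax : ∀ (ν : ℝ) (v : Fin n → ℝ), v ≠ 0 → M.mulVec v = ν • v → ν ≤ lmax)
    (v : Fin n → ℝ) :
    v ⬝ᵥ M.mulVec v ≤ lmax * (v ⬝ᵥ v) := by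
  classical
  set b := hM.eigenvectorBasis with hb
  set lam := hM.eigenvalues with hlam
  have heig : ∀ i, lam i ≤ lmax := by
    intro i
    refine hmax (lam i) (b i) ?_ ?_
    · intro h0
      have : ‖(b i : EuclideanSpace ℝ (Fin n))‖ = 1 := b.orthonormal.1 i
      rw [show (b i : EuclideanSpace ℝ (Fin n)) = 0 from by ext j; simpa using congrFun h0 j] at this
      simp at this
    · exact hM.mulVec_eigenvectorBasis i
  set v' : EuclideanSpace ℝ (Fin n) := WithLp.toLp 2 v with hv'
  have hrepr : ∀ (x : EuclideanSpace ℝ (Fin n)) i, b.repr x i = ⟪b i, x⟫ :=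
    fun x i => b.repr_apply_apply x i
  have hMv : ∀ i, b.repr (WithLp.toLp 2 (M.mulVec v)) i = lam i * b.repr v' i := by
    intro i
    rw [hrepr, hrepr]
    have h1 : (⟪b i, (WithLp.toLp 2 (M.mulVec v))⟫ : ℝ)
        = (b i : Fin n → ℝ) ⬝ᵥ M.mulVec v := by
      simp [hv', PiLp.inner_apply, dotProduct, RCLike.inner_apply, mul_comm]
    have h2 : (⟪b i, v'⟫ : ℝ) = (b i : Fin n → ℝ) ⬝ᵥ v := by
      simp [hv', PiLp.inner_apply, dotProduct, RCLike.inner_apply, mul_comm]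
    rw [h1, h2]
    rw [dotProduct_mulVec, ← Matrix.mulVec_transpose]
    have hMt : Mᵀ = M := by
      have := hM.eq
      rwa [Matrix.conjTranspose_eq_transpose_of_trivial] at this
    rw [hMt]
    have h3 : M *ᵥ (b i : Fin n → ℝ) = lam i • (b i : Fin n → ℝ) :=
      hM.mulVec_eigenvectorBasis i
    rw [h3, smul_dotProduct, smul_eq_mul]
  have hq : v ⬝ᵥ M.mulVec v = ∑ i, lam i * (b.repr v' i) ^ 2 := by
    have h4 : (⟪v', (WithLp.toLp 2 (M.mulVec v))⟫ : ℝ) = v ⬝ᵥ M.mulVec v := by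
      simp [hv', PiLp.inner_apply, dotProduct, RCLike.inner_apply, mul_comm]
    rw [← h4, ← b.repr.inner_map_map v' (WithLp.toLp 2 (M.mulVec v)),
      PiLp.inner_apply]
    simp only [RCLike.inner_apply, starRingEnd_apply, star_trivial]
    refine Finset.sum_congr rfl fun i _ => ?_
    rw [hMv i]
    ring
  have hn : v ⬝ᵥ v = ∑ i, (b.repr v' i) ^ 2 := by
    have h5 : (⟪v', v'⟫ : ℝ) = v ⬝ᵥ v := by
      rw [hv', PiLp.inner_apply]
      simp [dotProduct, RCLike.inner_apply, sq]
    rw [← h5, ← b.repr.inner_map_map v' v', PiLp.inner_apply]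
    simp only [RCLike.inner_apply, starRingEnd_apply, star_trivial]
    exact Finset.sum_congr rfl fun i _ => (sq _).symm
  rw [hq, hn, Finset.mul_sum]
  refine Finset.sum_le_sum fun i _ => ?_
  exact mul_le_mul_of_nonneg_right (heig i) (sq_nonneg _)

def mip {m p : ℕ} (A B : Matrix (Fin m) (Fin p) ℝ) : ℝ := ∑ i, ∑ j, A i j * B i j

theorem mip_symm {m p : ℕ} (A B : Matrix (Fin m) (Fin p) ℝ) : mip A B = mip B A := by
  simp [mip, mul_comm]

theorem frobSq_eq_mip {m p : ℕ} (A : Matrix (Fin m) (Fin p) ℝ) : frobSq A = mip A A := by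
  simp [frobSq, mip, sq]

theorem mip_sub_left {m p : ℕ} (A B C : Matrix (Fin m) (Fin p) ℝ) :
    mip (A - B) C = mip A C - mip B C := by
  simp [mip, Matrix.sub_apply, sub_mul, Finset.sum_sub_distrib]

theorem mip_add_left {m p : ℕ} (A B C : Matrix (Fin m) (Fin p) ℝ) :
    mip (A + B) C = mip A C + mip B C := by
  simp [mip, Matrix.add_apply, add_mul, Finset.sum_add_distrib]

theorem mip_sub_right {m p : ℕ} (A B C : Matrix (Fin m) (Fin p) ℝ) :
    mip A (B - C) = mip A B - mip A C := by
  rw [mip_symm, mip_sub_left, mip_symm B A, mip_symm C A]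

theorem mip_smul_left {m p : ℕ} (c : ℝ) (A B : Matrix (Fin m) (Fin p) ℝ) :
    mip (c • A) B = c * mip A B := by
  simp [mip, Matrix.smul_apply, Finset.mul_sum, mul_assoc]

theorem mip_eq_trace {m p : ℕ} (A B : Matrix (Fin m) (Fin p) ℝ) :
    mip A B = Matrix.trace (Aᵀ * B) := by
  simp only [Matrix.trace, Matrix.diag, Matrix.mul_apply, Matrix.transpose_apply, mip]
  exact Finset.sum_comm

theorem mip_mul_left {m k p : ℕ} (M : Matrix (Fin m) (Fin k) ℝ)
    (A : Matrix (Fin k) (Fin p) ℝ) (B : Matrix (Fin m) (Fin p) ℝ) :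
    mip (M * A) B = mip A (Mᵀ * B) := by
  rw [mip_eq_trace, mip_eq_trace, Matrix.transpose_mul, Matrix.mul_assoc]

theorem wSq_eq_mip {m p : ℕ} (P : Matrix (Fin m) (Fin m) ℝ) (A : Matrix (Fin m) (Fin p) ℝ) :
    wSq P A = mip A (P * A) := by
  rw [wSq, mip_eq_trace, Matrix.mul_assoc]

theorem frobSq_sub {m p : ℕ} (A B : Matrix (Fin m) (Fin p) ℝ) :
    frobSq (A - B) = frobSq A - 2 * mip A B + frobSq B := by
  rw [frobSq_eq_mip, frobSq_eq_mip, frobSq_eq_mip, mip_sub_left, mip_sub_right, mip_sub_right,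
    mip_symm B A]
  ring

theorem frobSq_neg {m p : ℕ} (A : Matrix (Fin m) (Fin p) ℝ) : frobSq (-A) = frobSq A := by
  simp [frobSq, Matrix.neg_apply]

theorem mip_wsymm {m p : ℕ} (P : Matrix (Fin m) (Fin m) ℝ) (hP : Pᵀ = P)
    (A B : Matrix (Fin m) (Fin p) ℝ) : mip A (P * B) = mip B (P * A) := by
  rw [mip_eq_trace, mip_eq_trace, ← Matrix.trace_transpose (Bᵀ * (P * A)),
    Matrix.transpose_mul, Matrix.transpose_mul, Matrix.transpose_transpose, hP,
    Matrix.mul_assoc]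

theorem wSq_sub {m p : ℕ} (P : Matrix (Fin m) (Fin m) ℝ) (hP : Pᵀ = P)
    (A B : Matrix (Fin m) (Fin p) ℝ) :
    wSq P (A - B) = wSq P A - 2 * mip A (P * B) + wSq P B := by
  rw [wSq_eq_mip, wSq_eq_mip, wSq_eq_mip, Matrix.mul_sub, mip_sub_left, mip_sub_right,
    mip_sub_right, mip_wsymm P hP B A]
  ring

theorem wSq_cols {m p : ℕ} (P : Matrix (Fin m) (Fin m) ℝ) (A : Matrix (Fin m) (Fin p) ℝ) :
    wSq P A = ∑ j, (fun i => A i j) ⬝ᵥ P.mulVec (fun i => A i j) := by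
  rw [wSq_eq_mip]
  unfold mip
  rw [Finset.sum_comm]
  refine Finset.sum_congr rfl fun j _ => ?_
  simp [dotProduct, Matrix.mulVec, Matrix.mul_apply]

theorem frobSq_cols {m p : ℕ} (A : Matrix (Fin m) (Fin p) ℝ) :
    frobSq A = ∑ j, (fun i => A i j) ⬝ᵥ (fun i => A i j) := by
  unfold frobSq
  rw [Finset.sum_comm]
  refine Finset.sum_congr rfl fun j _ => ?_
  simp [dotProduct, sq]

/-- Key descent inequality for Mirror-EXTRA (inequality (32) in the proof of
Theorem 4), with `L' = L λ_max(𝕃)`. -/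
theorem stmt_14 (n p : ℕ) (hn : 2 ≤ n) (hp : 1 ≤ p)
    (U : Matrix (Fin (n - 1)) (Fin n) ℝ)
    (hU : ∀ v : Fin n → ℝ, U.mulVec v = 0 ↔ ∃ a : ℝ, v = fun _ => a)
    (r : Matrix (Fin n) (Fin p) ℝ)
    (f : Fin n → (Fin p → ℝ) → ℝ)
    (g : Fin n → (Fin p → ℝ) → (Fin p → ℝ))
    -- each `fᵢ` is differentiable with gradient `g i`
    (hgrad : ∀ i (u : Fin p → ℝ),
      HasGradientAt (fun v : EuclideanSpace ℝ (Fin p) => f i ((WithLp.equiv 2 (Fin p → ℝ)) v))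
        ((WithLp.equiv 2 (Fin p → ℝ)).symm (g i u))
        ((WithLp.equiv 2 (Fin p → ℝ)).symm u))
    -- each `fᵢ` is convex
    (hconv : ∀ i, ConvexOn ℝ Set.univ (f i))
    (Li : Fin n → ℝ) (hLpos : ∀ i, 0 < Li i)
    -- each `∇fᵢ` is `Lᵢ`-Lipschitz
    (hlip : ∀ i (u v : Fin p → ℝ), enormSq (g i u - g i v) ≤ (Li i) ^ 2 * enormSq (u - v))
    -- `L = maxᵢ Lᵢ`
    (L : ℝ) (hL : IsGreatest (Set.range Li) L)
    -- `λ_max(𝕃)`: the largest eigenvalue of `𝕃 = UᵀU`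
    (lmax : ℝ)
    (hlmax_eig : ∃ v : Fin n → ℝ, v ≠ 0 ∧ (Uᵀ * U).mulVec v = lmax • v)
    (hlmax_max : ∀ (ν : ℝ) (v : Fin n → ℝ), v ≠ 0 → (Uᵀ * U).mulVec v = ν • v → ν ≤ lmax)
    (c : ℝ) (hc : 0 < c)
    -- the optimal pair `(x*, q*)`
    (xs : Matrix (Fin n) (Fin p) ℝ) (qs : Matrix (Fin (n - 1)) (Fin p) ℝ)
    (hopt1 : xs - r + c • (Uᵀ * qs) = 0)
    (hopt2 : U * gradMat g xs = 0)
    -- a Mirror-EXTRA trajectory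
    (x : ℕ → Matrix (Fin n) (Fin p) ℝ) (q : ℕ → Matrix (Fin (n - 1)) (Fin p) ℝ)
    (hrec1 : ∀ k : ℕ,
      x (k + 1) - r + c • (Uᵀ * q (k + 1))
        - c • ((Uᵀ * U) * (gradMat g (x (k + 1)) - gradMat g (x k))) = 0)
    (hrec2 : ∀ k : ℕ, q (k + 1) = q k + U * gradMat g (x (k + 1))) :
    ∀ k : ℕ,
      c * frobSq (q (k + 1) - qs)
        + (2 / (L * lmax) - c) * wSq (Uᵀ * U) (gradMat g (x (k + 1)) - gradMat g xs) ≤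
      c * frobSq (q k - qs)
        - c * frobSq (q k - q (k + 1))
        - c * wSq (Uᵀ * U) (gradMat g (x k) - gradMat g xs)
        + c * wSq (Uᵀ * U) (gradMat g (x k) - gradMat g (x (k + 1))) := by
  intro k
  have h1 := hrec1 k
  have h2 := hrec2 k
  set LL := Uᵀ * U with hLL
  set G1 := gradMat g (x (k + 1)) with hG1
  set G0 := gradMat g (x k) with hG0
  set Gs := gradMat g xs with hGs
  set D := G1 - Gs with hD
  set E := G0 - Gs with hE
  have hLt : LLᵀ = LL := by rw [hLL, Matrix.transpose_mul, Matrix.transpose_transpose]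
  have herm : LL.IsHermitian := by
    have h := Matrix.isHermitian_conjTranspose_mul_self U
    rwa [Matrix.conjTranspose_eq_transpose_of_trivial] at h
  have hLpos' : 0 < L := by
    obtain ⟨i0, hi0⟩ := hL.1
    exact hi0 ▸ hLpos i0
  have hLle : ∀ i, Li i ≤ L := fun i => hL.2 (Set.mem_range_self i)
  -- positivity of lmax
  have hlpos : 0 < lmax := by
    by_contra hneg
    push_neg at hneg
    have h0n : 0 < n := by omega
    have h1n : 1 < n := by omega
    set idx0 : Fin n := ⟨0, h0n⟩ with hidx0
    set idx1 : Fin n := ⟨1, h1n⟩ with hidx1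
    set v : Fin n → ℝ := fun j => if j = idx0 then 1 else 0 with hv
    have hq := quad_le_lmax LL herm lmax hlmax_max v
    have hvv : v ⬝ᵥ v = 1 := by
      simp [hv, dotProduct, ite_mul, mul_ite]
    have hquad : v ⬝ᵥ LL.mulVec v = (U.mulVec v) ⬝ᵥ (U.mulVec v) := by
      rw [hLL, ← Matrix.mulVec_mulVec, Matrix.dotProduct_mulVec, Matrix.vecMul_transpose]
    have h0 : (0:ℝ) ≤ (U.mulVec v) ⬝ᵥ (U.mulVec v) := by
      rw [dotProduct]
      exact Finset.sum_nonneg fun i _ => mul_self_nonneg _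
    have hzero : (U.mulVec v) ⬝ᵥ (U.mulVec v) = 0 := by
      rw [← hquad]
      refine le_antisymm ?_ (hquad ▸ h0)
      calc v ⬝ᵥ LL.mulVec v ≤ lmax * (v ⬝ᵥ v) := hq
        _ = lmax := by rw [hvv, mul_one]
        _ ≤ 0 := hneg
    have hUv : U.mulVec v = 0 := dotProduct_self_eq_zero.mp hzero
    obtain ⟨a, ha⟩ := (hU v).mp hUv
    have hx1 : v idx0 = 1 := by simp [hv]
    have hx2 : v idx1 = 0 := by
      rw [hv]
      simp only [hidx0, hidx1]
      rw [if_neg (by simp [Fin.mk.injEq])]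
    rw [ha] at hx1 hx2
    simp at hx1 hx2
    rw [hx1] at hx2
    exact one_ne_zero hx2
  -- aggregated co-coercivity
  have rowkey : ∀ i : Fin n, enormSq (g i (x (k + 1) i) - g i (xs i))
      ≤ Li i * ∑ j, (x (k + 1) i j - xs i j) * (g i (x (k + 1) i) j - g i (xs i) j) :=
    fun i => cocoer_row p (f i) (g i) (hgrad i) (hconv i) (Li i) (hLpos i) (hlip i) _ _
  have key1 : (1 / L) * frobSq D ≤ mip (x (k + 1) - xs) D := by
    unfold frobSq mip
    rw [Finset.mul_sum]
    refine Finset.sum_le_sum fun i _ => ?_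
    have hDij : ∀ j, D i j = g i (x (k + 1) i) j - g i (xs i) j := by
      intro j
      rw [hD, Matrix.sub_apply, hG1, hGs]
      rfl
    have hXij : ∀ j, (x (k + 1) - xs) i j = x (k + 1) i j - xs i j := fun j => rfl
    have hrow := rowkey i
    have hen : enormSq (g i (x (k + 1) i) - g i (xs i)) = ∑ j, (D i j) ^ 2 := by
      unfold enormSq
      exact Finset.sum_congr rfl fun j _ => by rw [hDij j]; rfl
    have hiprow : ∑ j, (x (k + 1) i j - xs i j) * (g i (x (k + 1) i) j - g i (xs i) j)
        = ∑ j, (x (k + 1) - xs) i j * D i j := by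
      refine Finset.sum_congr rfl fun j _ => ?_
      rw [hDij j, hXij j]
    rw [hen, hiprow] at hrow
    set S := ∑ j, (D i j) ^ 2 with hS
    set T := ∑ j, (x (k + 1) - xs) i j * D i j with hT
    have hS0 : 0 ≤ S := Finset.sum_nonneg fun j _ => sq_nonneg _
    have t1 : (1 / L) * S ≤ (1 / Li i) * S :=
      mul_le_mul_of_nonneg_right (one_div_le_one_div_of_le (hLpos i) (hLle i)) hS0
    have t2 : (1 / Li i) * S ≤ T := by
      rw [one_div, inv_mul_eq_div]
      exact (div_le_iff₀' (hLpos i)).mpr hrow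
    linarith
  have key2 : wSq LL D ≤ lmax * frobSq D := by
    rw [wSq_cols, frobSq_cols, Finset.mul_sum]
    exact Finset.sum_le_sum fun j _ => quad_le_lmax LL herm lmax hlmax_max _
  -- trajectory identities
  have keyX : x (k + 1) - xs = c • (LL * (G1 - G0)) - c • (Uᵀ * q (k + 1)) + c • (Uᵀ * qs) := by
    rw [← sub_eq_zero]
    have hrw : x (k + 1) - xs - (c • (LL * (G1 - G0)) - c • (Uᵀ * q (k + 1)) + c • (Uᵀ * qs))
        = (x (k + 1) - r + c • (Uᵀ * q (k + 1)) - c • (LL * (G1 - G0)))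
          - (xs - r + c • (Uᵀ * qs)) := by abel
    rw [hrw, h1, hopt1, sub_zero]
  have keyB : U * D = q (k + 1) - q k := by
    rw [hD, Matrix.mul_sub, hopt2, sub_zero, h2]
    abel
  have keyM : mip (x (k + 1) - xs) D
      = c * mip D (LL * D) - c * mip E (LL * D)
        - c * mip (q (k + 1) - qs) (q (k + 1) - q k) := by
    have e1 : mip (c • (LL * (G1 - G0))) D = c * (mip D (LL * D) - mip E (LL * D)) := by
      rw [mip_smul_left, mip_mul_left, hLt]
      have hde : G1 - G0 = D - E := by rw [hD, hE]; abel
      rw [hde, mip_sub_left]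
    have e2 : mip (c • (Uᵀ * q (k + 1))) D = c * mip (q (k + 1)) (U * D) := by
      rw [mip_smul_left, mip_mul_left, Matrix.transpose_transpose]
    have e3 : mip (c • (Uᵀ * qs)) D = c * mip qs (U * D) := by
      rw [mip_smul_left, mip_mul_left, Matrix.transpose_transpose]
    rw [keyX, mip_add_left, mip_sub_left (c • (LL * (G1 - G0))) (c • (Uᵀ * q (k + 1))) D,
      e1, e2, e3, keyB, mip_sub_left (q (k + 1)) qs (q (k + 1) - q k)]
    ring
  -- polarization identities, scaled by c
  have P1 : c * frobSq (q k - qs) = c * frobSq (q (k + 1) - qs)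
      - 2 * (c * mip (q (k + 1) - qs) (q (k + 1) - q k)) + c * frobSq (q (k + 1) - q k) := by
    have h : q k - qs = (q (k + 1) - qs) - (q (k + 1) - q k) := by abel
    rw [h, frobSq_sub]
    ring
  have P2 : c * wSq LL (G0 - G1) = c * wSq LL E - 2 * (c * mip E (LL * D)) + c * wSq LL D := by
    have h : G0 - G1 = E - D := by rw [hE, hD]; abel
    rw [h, wSq_sub LL hLt]
    ring
  have P3 : frobSq (q k - q (k + 1)) = frobSq (q (k + 1) - q k) := by
    have h : q k - q (k + 1) = -(q (k + 1) - q k) := by abel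
    rw [h, frobSq_neg]
  have hwqc : c * wSq LL D = c * mip D (LL * D) := by rw [wSq_eq_mip]
  have key2' : 2 / (L * lmax) * wSq LL D ≤ 2 * (1 / L * frobSq D) := by
    have hpos : (0:ℝ) < 2 / (L * lmax) := by positivity
    calc 2 / (L * lmax) * wSq LL D ≤ 2 / (L * lmax) * (lmax * frobSq D) :=
          mul_le_mul_of_nonneg_left key2 hpos.le
      _ = 2 * (1 / L * frobSq D) := by
          field_simp
  have final : 2 / (L * lmax) * wSq LL D ≤ 2 * mip (x (k + 1) - xs) D := by
    linarith
  rw [P3]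
  linarith [final, keyM, P1, P2, hwqc]
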